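/- Let N be a bounded nilpotent operator of degree p on a Banach space, and suppose there exist C > 0, ω > 0 and an integer q ∈ ℕ₀ such that ‖(λN−I)⁻¹‖ ≤ C λ^{q−1} for all λ > ω. Then q ≥ p. (This expresses that the resolvent index dominates the nilpotency index for the nilpotent part of a Weierstraß form.) -/

import Mathlib

/-- if `N` is nilpotent of degree `p` and
`‖(λN−I)⁻¹‖ = ‖∑_{i<p} (λN)^i‖ ≤ C λ^(q−1)` for all `λ > ω`, then `q ≥ p`:
the resolvent index dominates the nilpotency index. -/
theorem stmt_9 {Y : Type*} [NormedAddCommGroup Y] [NormedSpace ℂ Y]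
    (N : Y →L[ℂ] Y) (p : ℕ) (hN : N ^ p = 0) (hN' : N ^ (p - 1) ≠ 0)
    (C ω : ℝ) (hC : 0 < C) (hω : 0 < ω) (q : ℕ)
    (hbound : ∀ lam : ℝ, ω < lam →
      ‖-(∑ i ∈ Finset.range p, ((lam : ℂ) • N) ^ i)‖ ≤ C * lam ^ ((q : ℝ) - 1)) :
    p ≤ q := by
  rcases p with _ | n
  · exact Nat.zero_le q
  by_contra h
  push_neg at h
  have hq : q ≤ n := Nat.lt_succ_iff.mp h
  have hn' : N ^ n ≠ 0 := by simpa using hN'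
  set B : ℝ := ‖N ^ n‖ with hB
  have hBpos : 0 < B := norm_pos_iff.mpr hn'
  set S : ℝ := ∑ i ∈ Finset.range n, ‖N‖ ^ i with hS
  have hSnn : 0 ≤ S := Finset.sum_nonneg fun i _ => pow_nonneg (norm_nonneg N) i
  set K : ℝ := C + S with hK
  have hKpos : 0 < K := by positivity
  set lam : ℝ := max (max ω 1) (K / B) + 1 with hlam
  have hle1 : (1:ℝ) ≤ ω ⊔ 1 ⊔ K / B := le_trans le_sup_right le_sup_left
  have hleω : ω ≤ ω ⊔ 1 ⊔ K / B := le_trans le_sup_left le_sup_left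
  have hleKB : K / B ≤ ω ⊔ 1 ⊔ K / B := le_sup_right
  have hlam1 : 1 < lam := by rw [hlam]; linarith
  have hlampos : 0 < lam := by linarith
  have hlamω : ω < lam := by rw [hlam]; linarith
  have hlamKB : K / B < lam := by rw [hlam]; linarith
  -- the bound from hypothesis
  have hb := hbound lam hlamω
  rw [norm_neg] at hb
  -- split off the top term
  have hsplit : ∑ i ∈ Finset.range (n+1), ((lam : ℂ) • N) ^ i
      = (∑ i ∈ Finset.range n, ((lam : ℂ) • N) ^ i) + ((lam : ℂ) • N) ^ n :=
    Finset.sum_range_succ _ _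
  have htop : ‖((lam : ℂ) • N) ^ n‖ = lam ^ n * B := by
    rw [smul_pow, norm_smul ((lam:ℂ)^n) (N^n), norm_pow]
    simp [Complex.norm_real, abs_of_pos hlampos, hB]
  have hlower : lam ^ n * B ≤ ‖∑ i ∈ Finset.range (n+1), ((lam : ℂ) • N) ^ i‖
      + ‖∑ i ∈ Finset.range n, ((lam : ℂ) • N) ^ i‖ := by
    rw [← htop]
    have : ((lam : ℂ) • N) ^ n = (∑ i ∈ Finset.range (n+1), ((lam : ℂ) • N) ^ i)
        - ∑ i ∈ Finset.range n, ((lam : ℂ) • N) ^ i := by rw [hsplit]; abel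
    rw [this]
    exact norm_sub_le _ _
  -- bound the lower-order sum
  have hsum : ‖∑ i ∈ Finset.range n, ((lam : ℂ) • N) ^ i‖ ≤ lam ^ ((n:ℝ) - 1) * S := by
    calc ‖∑ i ∈ Finset.range n, ((lam : ℂ) • N) ^ i‖
        ≤ ∑ i ∈ Finset.range n, ‖((lam : ℂ) • N) ^ i‖ := norm_sum_le _ _
      _ ≤ ∑ i ∈ Finset.range n, lam ^ ((n:ℝ) - 1) * ‖N‖ ^ i := by
          apply Finset.sum_le_sum
          intro i hi
          have hi' : i < n := Finset.mem_range.mp hi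
          have h1 : ‖((lam : ℂ) • N) ^ i‖ ≤ lam ^ i * ‖N‖ ^ i := by
            rw [smul_pow, norm_smul ((lam:ℂ)^i) (N^i), norm_pow]
            have : ‖(lam : ℂ)‖ = lam := by
              simp [Complex.norm_real, abs_of_pos hlampos]
            rw [this]
            have hNi : ‖N ^ i‖ ≤ ‖N‖ ^ i := by
              rcases Nat.eq_zero_or_pos i with h0 | h0
              · subst h0; simp only [pow_zero]; exact ContinuousLinearMap.norm_id_le
              · exact norm_pow_le' N h0
            exact mul_le_mul_of_nonneg_left hNi (by positivity)
          have h2 : lam ^ i ≤ lam ^ ((n:ℝ) - 1) := by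
            rw [← Real.rpow_natCast lam i]
            apply Real.rpow_le_rpow_of_exponent_le hlam1.le
            have : (i:ℝ) ≤ (n:ℝ) - 1 := by
              have : (i:ℝ) + 1 ≤ (n:ℝ) := by exact_mod_cast hi'
              linarith
            exact this
          calc ‖((lam : ℂ) • N) ^ i‖ ≤ lam ^ i * ‖N‖ ^ i := h1
            _ ≤ lam ^ ((n:ℝ) - 1) * ‖N‖ ^ i :=
                mul_le_mul_of_nonneg_right h2 (by positivity)
      _ = lam ^ ((n:ℝ) - 1) * S := by rw [hS, ← Finset.mul_sum]
  -- bound the rpow exponent in hb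
  have hexp : C * lam ^ ((q:ℝ) - 1) ≤ C * lam ^ ((n:ℝ) - 1) := by
    apply mul_le_mul_of_nonneg_left _ hC.le
    apply Real.rpow_le_rpow_of_exponent_le hlam1.le
    have : (q:ℝ) ≤ (n:ℝ) := by exact_mod_cast hq
    linarith
  -- combine
  have hmain : lam ^ n * B ≤ K * lam ^ ((n:ℝ) - 1) := by
    calc lam ^ n * B ≤ ‖∑ i ∈ Finset.range (n+1), ((lam : ℂ) • N) ^ i‖
        + ‖∑ i ∈ Finset.range n, ((lam : ℂ) • N) ^ i‖ := hlower
      _ ≤ C * lam ^ ((n:ℝ) - 1) + lam ^ ((n:ℝ) - 1) * S :=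
          add_le_add (le_trans hb hexp) hsum
      _ = K * lam ^ ((n:ℝ) - 1) := by rw [hK]; ring
  -- derive B ≤ K / lam
  have hpow : lam ^ n = lam ^ ((n:ℝ) - 1) * lam := by
    rw [← Real.rpow_natCast lam n,
      show lam ^ ((n:ℝ) - 1) * lam = lam ^ (((n:ℝ) - 1) + 1) from by
        rw [Real.rpow_add hlampos, Real.rpow_one]]
    norm_num
  have hrpos : 0 < lam ^ ((n:ℝ) - 1) := Real.rpow_pos_of_pos hlampos _
  have hBle : B * lam ≤ K := by
    have := hmain
    rw [hpow] at this
    have h' : lam ^ ((n:ℝ) - 1) * (lam * B) ≤ lam ^ ((n:ℝ) - 1) * K := by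
      calc lam ^ ((n:ℝ) - 1) * (lam * B) = lam ^ ((n:ℝ) - 1) * lam * B := by ring
        _ ≤ K * lam ^ ((n:ℝ) - 1) := this
        _ = lam ^ ((n:ℝ) - 1) * K := by ring
    have := (mul_le_mul_iff_right₀ hrpos).mp h'
    linarith [this]
  have : K / B < lam := hlamKB
  have hKlt : K < B * lam := by
    rw [div_lt_iff₀ hBpos] at this
    linarith [this]
  linarith
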